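/- Let f_i : ℝ^d → ℝ be convex and L-smooth for i = 1,…,m, and let X, X' ∈ ℝ^{m×d} with rows x^{(i)}, x'^{(i)} and row averages x̄, x̄'. Let ȳ ∈ ℝ^d. Then Σᵢ ‖∇f_i(x'^{(i)}) - ∇f_i(x^{(i)})‖² ≤ 4mL·D_f(ȳ, X') + 4mL²‖x̄ - ȳ‖² + 4L²‖ΠX‖², where D_f(ȳ, X') = (1/m)Σᵢ [ f_i(ȳ) - f_i(x'^{(i)}) - ⟨∇f_i(x'^{(i)}), ȳ - x'^{(i)}⟩ ] and ΠX = X - 𝟙x̄. -/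

import Mathlib

open Finset
open scoped RealInnerProductSpace

theorem stmt10 (d m : ℕ) (hm : 0 < m)
    (f : Fin m → EuclideanSpace ℝ (Fin d) → ℝ)
    (f' : Fin m → EuclideanSpace ℝ (Fin d) → EuclideanSpace ℝ (Fin d))
    (L : ℝ) (hL : 0 < L)
    (hbreg : ∀ i u v, ‖f' i u - f' i v‖ ^ 2 ≤ 2 * L * (f i u - f i v - ⟪f' i v, u - v⟫))
    (hlip : ∀ i u v, ‖f' i u - f' i v‖ ≤ L * ‖u - v‖)
    (X X' : Fin m → EuclideanSpace ℝ (Fin d))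
    (xbar : EuclideanSpace ℝ (Fin d))
    (hxbar : xbar = (m : ℝ)⁻¹ • ∑ i : Fin m, X i)
    (ybar : EuclideanSpace ℝ (Fin d)) :
    ∑ i : Fin m, ‖f' i (X' i) - f' i (X i)‖ ^ 2 ≤
      4 * m * L *
          ((m : ℝ)⁻¹ * ∑ i : Fin m, (f i ybar - f i (X' i) - ⟪f' i (X' i), ybar - X' i⟫)) +
        4 * m * L ^ 2 * ‖xbar - ybar‖ ^ 2 +
        4 * L ^ 2 * ∑ i : Fin m, ‖X i - xbar‖ ^ 2 := by
  have key : ∀ i : Fin m, ‖f' i (X' i) - f' i (X i)‖ ^ 2 ≤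
      4 * L * (f i ybar - f i (X' i) - ⟪f' i (X' i), ybar - X' i⟫)
      + 4 * L ^ 2 * ‖xbar - ybar‖ ^ 2 + 4 * L ^ 2 * ‖X i - xbar‖ ^ 2 := by
    intro i
    have h1 := hbreg i ybar (X' i)
    have h2 : ‖f' i (X i) - f' i ybar‖ ≤ L * (‖X i - xbar‖ + ‖xbar - ybar‖) := by
      calc ‖f' i (X i) - f' i ybar‖ ≤ L * ‖X i - ybar‖ := hlip i (X i) ybar
        _ ≤ L * (‖X i - xbar‖ + ‖xbar - ybar‖) := by
            have : ‖X i - ybar‖ ≤ ‖X i - xbar‖ + ‖xbar - ybar‖ := by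
              calc ‖X i - ybar‖ = ‖(X i - xbar) + (xbar - ybar)‖ := by abel_nf
                _ ≤ _ := norm_add_le _ _
            nlinarith
    have htri : ‖f' i (X' i) - f' i (X i)‖ ≤
        ‖f' i ybar - f' i (X' i)‖ + ‖f' i (X i) - f' i ybar‖ := by
      calc ‖f' i (X' i) - f' i (X i)‖
          = ‖(-(f' i ybar - f' i (X' i))) + (-(f' i (X i) - f' i ybar))‖ := by abel_nf
        _ ≤ ‖-(f' i ybar - f' i (X' i))‖ + ‖-(f' i (X i) - f' i ybar)‖ := norm_add_le _ _
        _ = _ := by rw [norm_neg, norm_neg]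
    nlinarith [norm_nonneg (f' i (X' i) - f' i (X i)), norm_nonneg (f' i ybar - f' i (X' i)),
      norm_nonneg (f' i (X i) - f' i ybar), norm_nonneg (X i - xbar), norm_nonneg (xbar - ybar),
      sq_nonneg (‖f' i ybar - f' i (X' i)‖ - ‖f' i (X i) - f' i ybar‖),
      sq_nonneg (‖X i - xbar‖ - ‖xbar - ybar‖)]
  have hsum : ∑ i : Fin m, ‖f' i (X' i) - f' i (X i)‖ ^ 2 ≤
      ∑ i : Fin m, (4 * L * (f i ybar - f i (X' i) - ⟪f' i (X' i), ybar - X' i⟫)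
      + 4 * L ^ 2 * ‖xbar - ybar‖ ^ 2 + 4 * L ^ 2 * ‖X i - xbar‖ ^ 2) :=
    Finset.sum_le_sum (fun i _ => key i)
  have hm' : (m : ℝ) ≠ 0 := Nat.cast_ne_zero.mpr hm.ne'
  calc ∑ i : Fin m, ‖f' i (X' i) - f' i (X i)‖ ^ 2 ≤ _ := hsum
    _ = 4 * L * ∑ i : Fin m, (f i ybar - f i (X' i) - ⟪f' i (X' i), ybar - X' i⟫)
        + (m : ℝ) * (4 * L ^ 2 * ‖xbar - ybar‖ ^ 2)
        + 4 * L ^ 2 * ∑ i : Fin m, ‖X i - xbar‖ ^ 2 := by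
      rw [Finset.sum_add_distrib, Finset.sum_add_distrib, ← Finset.mul_sum, ← Finset.mul_sum,
        Finset.sum_const, Finset.card_univ, Fintype.card_fin, nsmul_eq_mul, ← Finset.mul_sum]
      ring
    _ = 4 * m * L *
          ((m : ℝ)⁻¹ * ∑ i : Fin m, (f i ybar - f i (X' i) - ⟪f' i (X' i), ybar - X' i⟫)) +
        4 * m * L ^ 2 * ‖xbar - ybar‖ ^ 2 +
        4 * L ^ 2 * ∑ i : Fin m, ‖X i - xbar‖ ^ 2 := by
      field_simp
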